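/- Let q̆ = q^ψ be the entropy flux generated by ψ(s) = ½ s|s|. Then there exists a constant C(γ) > 0, depending only on γ, such that for all ρ > 0 and u ∈ ℝ: q̆(ρ, u) ≥ C(γ)^{−1}(ρ|u|³ + ρ^{γ+θ}). -/

import Mathlib

open Real MeasureTheory

/-- `θ = (γ − 1)/2`. -/
noncomputable def thetaExp (γ : ℝ) : ℝ := (γ - 1) / 2

/-- `λ = (3 − γ)/(2(γ − 1))`. -/
noncomputable def lamExp (γ : ℝ) : ℝ := (3 - γ) / (2 * (γ - 1))

/-- The weak entropy of the isentropic Euler system with polytropic pressure, generated by `ψ`: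
`η^ψ(ρ, u) = ρ ∫_{−1}^{1} ψ(u + ρ^θ s)(1 − s²)^λ ds`. -/
noncomputable def entropy (γ : ℝ) (ψ : ℝ → ℝ) (ρ u : ℝ) : ℝ :=
  ρ * ∫ s in (-1:ℝ)..1, ψ (u + ρ ^ thetaExp γ * s) * (1 - s ^ 2) ^ lamExp γ

/-- The weak entropy flux generated by `ψ`:
`q^ψ(ρ, u) = ρ ∫_{−1}^{1} (u + θρ^θ s) ψ(u + ρ^θ s)(1 − s²)^λ ds`. -/
noncomputable def entropyFlux (γ : ℝ) (ψ : ℝ → ℝ) (ρ u : ℝ) : ℝ :=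
  ρ * ∫ s in (-1:ℝ)..1,
    (u + thetaExp γ * ρ ^ thetaExp γ * s) * ψ (u + ρ ^ thetaExp γ * s) * (1 - s ^ 2) ^ lamExp γ

/-- Auxiliary: the weight `(1 - s²)^λ`. -/
noncomputable def wfun (lam : ℝ) (s : ℝ) : ℝ := (1 - s ^ 2) ^ lam

/-- Auxiliary: the rescaled integrand. -/
noncomputable def gfun (θ lam v : ℝ) (s : ℝ) : ℝ :=
  (v + θ * s) * ((v + s) * |v + s| / 2) * wfun lam s

lemma wfun_meas (lam : ℝ) : Measurable (wfun lam) := by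
  unfold wfun; fun_prop

lemma wfun_int01 {lam : ℝ} (hlam : -1 < lam) :
    IntervalIntegrable (wfun lam) volume 0 1 := by
  have hmeas : AEStronglyMeasurable (wfun lam)
      (volume.restrict (Set.uIoc (0:ℝ) 1)) := (wfun_meas lam).aestronglyMeasurable
  set M : ℝ := max 1 (2 ^ lam) with hM
  have hM0 : (0:ℝ) ≤ M := le_trans zero_le_one (le_max_left _ _)
  have hdom : IntervalIntegrable (fun s : ℝ => M * (1 - s) ^ lam) volume 0 1 := by
    have h1 : IntervalIntegrable (fun t : ℝ => t ^ lam) volume 0 1 :=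
      intervalIntegral.intervalIntegrable_rpow' hlam
    have h2 := h1.comp_sub_left 1
    simpa using h2.symm.const_mul M
  apply hdom.mono_fun hmeas
  filter_upwards [ae_restrict_mem measurableSet_uIoc] with s hs
  rw [Set.uIoc_of_le (by norm_num : (0:ℝ) ≤ 1)] at hs
  obtain ⟨hs0, hs1⟩ := hs
  have h1s : (0:ℝ) ≤ 1 - s := by linarith
  have h1s2 : (0:ℝ) ≤ 1 - s ^ 2 := by nlinarith
  have key : wfun lam s = (1 - s) ^ lam * (1 + s) ^ lam := by
    rw [wfun, ← Real.mul_rpow h1s (by linarith : (0:ℝ) ≤ 1 + s)]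
    ring_nf
  have hb : (1 + s) ^ lam ≤ M := by
    rcases le_or_gt 0 lam with h | h
    · exact le_max_of_le_right (Real.rpow_le_rpow (by linarith) (by linarith) h)
    · exact le_max_of_le_left (Real.rpow_le_one_of_one_le_of_nonpos (by linarith) h.le)
  simp only [Real.norm_eq_abs]
  rw [key, abs_of_nonneg (mul_nonneg (Real.rpow_nonneg h1s _) (Real.rpow_nonneg (by linarith) _)),
    abs_of_nonneg (mul_nonneg hM0 (Real.rpow_nonneg h1s _))]
  calc (1 - s) ^ lam * (1 + s) ^ lam ≤ (1 - s) ^ lam * M :=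
        mul_le_mul_of_nonneg_left hb (Real.rpow_nonneg h1s _)
    _ = M * (1 - s) ^ lam := mul_comm _ _

lemma wfun_int {lam : ℝ} (hlam : -1 < lam) :
    IntervalIntegrable (wfun lam) volume (-1) 1 := by
  have h01 := wfun_int01 hlam
  have hneg : IntervalIntegrable (wfun lam) volume (-1) 0 := by
    have h := (IntervalIntegrable.iff_comp_neg (f := wfun lam) (a := 1) (b := 0)).mp h01.symm
    have heq : (fun x : ℝ => wfun lam (-x)) = wfun lam := by
      funext x; simp [wfun]
    rw [heq] at h
    simpa using h
  exact hneg.trans h01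

lemma sum_bound {θ v s : ℝ} (hθ : 0 < θ) (hv : 0 ≤ v) (h0 : 0 ≤ s) :
    min 1 θ / 2 * (v ^ 3 + s ^ 3) ≤
      ((v + θ * s) * ((v + s) * |v + s|) + (v - θ * s) * ((v - s) * |v - s|)) / 2 := by
  have habs1 : |v + s| = v + s := abs_of_nonneg (by linarith)
  have hmin1 : min 1 θ ≤ 1 := min_le_left _ _
  have hminθ : min 1 θ ≤ θ := min_le_right _ _
  have hmin0 : 0 < min 1 θ := lt_min one_pos hθ
  rcases le_or_gt s v with h | h
  · have habs2 : |v - s| = v - s := abs_of_nonneg (by linarith)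
    rw [habs1, habs2]
    nlinarith [pow_le_pow_left₀ h0 h 3, mul_nonneg (mul_nonneg hθ.le hv) (mul_nonneg h0 h0),
      pow_nonneg hv 3, pow_nonneg h0 3]
  · have habs2 : |v - s| = s - v := by rw [abs_sub_comm]; exact abs_of_nonneg (by linarith)
    rw [habs1, habs2]
    nlinarith [pow_le_pow_left₀ hv h.le 3, mul_nonneg (mul_nonneg hv hv) h0,
      mul_nonneg (mul_nonneg hθ.le (mul_nonneg hv hv)) h0,
      pow_nonneg hv 3, pow_nonneg h0 3]

lemma integral_bound {θ lam : ℝ} (hθ : 0 < θ) (hlam : -1 < lam) {v : ℝ} (hv : 0 ≤ v) :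
    min 1 θ / 2 * ((∫ s in (1/2:ℝ)..(3/4), wfun lam s) / 8) * (v ^ 3 + 1) ≤
      ∫ s in (-1:ℝ)..1, gfun θ lam v s := by
  have hwint : IntervalIntegrable (wfun lam) volume (-1) 1 := wfun_int hlam
  have hmem : ∀ x : ℝ, -1 ≤ x → x ≤ 1 → x ∈ Set.uIcc (-1:ℝ) 1 := by
    intro x h1 h2
    rw [Set.uIcc_of_le (by norm_num : (-1:ℝ) ≤ 1)]
    exact ⟨h1, h2⟩
  have hwsub : ∀ a b : ℝ, -1 ≤ a → a ≤ 1 → -1 ≤ b → b ≤ 1 →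
      IntervalIntegrable (wfun lam) volume a b := fun a b ha1 ha2 hb1 hb2 =>
    hwint.mono_set (Set.uIcc_subset_uIcc (hmem a ha1 ha2) (hmem b hb1 hb2))
  have hwnn : ∀ s : ℝ, -1 ≤ s → s ≤ 1 → 0 ≤ wfun lam s := fun s h1 h2 =>
    Real.rpow_nonneg (by nlinarith) _
  have hcont : Continuous fun s : ℝ => (v + θ * s) * ((v + s) * |v + s| / 2) := by
    fun_prop
  have hgint : ∀ a b : ℝ, -1 ≤ a → a ≤ 1 → -1 ≤ b → b ≤ 1 →
      IntervalIntegrable (gfun θ lam v) volume a b := fun a b ha1 ha2 hb1 hb2 =>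
    (hwsub a b ha1 ha2 hb1 hb2).continuousOn_mul hcont.continuousOn
  have hgnegint : IntervalIntegrable (fun s => gfun θ lam v (-s)) volume 0 1 := by
    have h := (IntervalIntegrable.iff_comp_neg (f := gfun θ lam v) (a := -1) (b := 0)).mp
      (hgint (-1) 0 (by norm_num) (by norm_num) (by norm_num) (by norm_num))
    simpa using h.symm
  -- split the integral
  have hsplit : ∫ s in (-1:ℝ)..1, gfun θ lam v s
      = (∫ s in (-1:ℝ)..0, gfun θ lam v s) + ∫ s in (0:ℝ)..1, gfun θ lam v s :=
    (intervalIntegral.integral_add_adjacent_intervals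
      (hgint (-1) 0 (by norm_num) (by norm_num) (by norm_num) (by norm_num))
      (hgint 0 1 (by norm_num) (by norm_num) (by norm_num) (by norm_num))).symm
  have hneg : (∫ s in (-1:ℝ)..0, gfun θ lam v s) = ∫ s in (0:ℝ)..1, gfun θ lam v (-s) := by
    rw [intervalIntegral.integral_comp_neg (fun s => gfun θ lam v s)]
    norm_num
  have hadd : (∫ s in (0:ℝ)..1, gfun θ lam v s) + ∫ s in (0:ℝ)..1, gfun θ lam v (-s)
      = ∫ s in (0:ℝ)..1, (gfun θ lam v s + gfun θ lam v (-s)) :=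
    (intervalIntegral.integral_add
      (hgint 0 1 (by norm_num) (by norm_num) (by norm_num) (by norm_num)) hgnegint).symm
  -- lower bound integrand
  have hLint : ∀ a b : ℝ, -1 ≤ a → a ≤ 1 → -1 ≤ b → b ≤ 1 →
      IntervalIntegrable (fun s => min 1 θ / 2 * ((v ^ 3 + s ^ 3) * wfun lam s)) volume a b := by
    intro a b ha1 ha2 hb1 hb2
    exact ((hwsub a b ha1 ha2 hb1 hb2).continuousOn_mul (by fun_prop)).const_mul _
  have hpt : ∀ s ∈ Set.Icc (0:ℝ) 1,
      min 1 θ / 2 * ((v ^ 3 + s ^ 3) * wfun lam s) ≤ gfun θ lam v s + gfun θ lam v (-s) := by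
    intro s hs
    have hwn : 0 ≤ wfun lam s := hwnn s (by linarith [hs.1]) hs.2
    have hg2 : gfun θ lam v (-s) = (v - θ * s) * ((v - s) * |v - s| / 2) * wfun lam s := by
      have e1 : v + θ * -s = v - θ * s := by ring
      have e2 : v + -s = v - s := by ring
      have e3 : wfun lam (-s) = wfun lam s := by simp [wfun]
      simp only [gfun]
      rw [e1, e2, e3]
    have hsum : gfun θ lam v s + gfun θ lam v (-s)
        = ((v + θ * s) * ((v + s) * |v + s|) + (v - θ * s) * ((v - s) * |v - s|)) / 2
          * wfun lam s := by
      rw [hg2]; simp only [gfun]; ring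
    rw [hsum, ← mul_assoc]
    exact mul_le_mul_of_nonneg_right (sum_bound hθ hv hs.1) hwn
  have step1 : (∫ s in (0:ℝ)..1, min 1 θ / 2 * ((v ^ 3 + s ^ 3) * wfun lam s))
      ≤ ∫ s in (0:ℝ)..1, (gfun θ lam v s + gfun θ lam v (-s)) :=
    intervalIntegral.integral_mono_on (by norm_num)
      (hLint 0 1 (by norm_num) (by norm_num) (by norm_num) (by norm_num))
      ((hgint 0 1 (by norm_num) (by norm_num) (by norm_num) (by norm_num)).add hgnegint) hpt
  -- bound the lower integral from below
  have hLnn : ∀ a b : ℝ, 0 ≤ a → a ≤ b → b ≤ 1 →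
      0 ≤ ∫ s in a..b, min 1 θ / 2 * ((v ^ 3 + s ^ 3) * wfun lam s) := by
    intro a b ha hab hb
    apply intervalIntegral.integral_nonneg hab
    intro x hx
    have hx0 : (0:ℝ) ≤ x := le_trans ha hx.1
    have hwn : 0 ≤ wfun lam x := hwnn x (by linarith) (le_trans hx.2 hb)
    have h0 : 0 ≤ min 1 θ / 2 := by positivity
    have h1 : 0 ≤ v ^ 3 + x ^ 3 := by positivity
    positivity
  have hsplitL : (∫ s in (0:ℝ)..1, min 1 θ / 2 * ((v ^ 3 + s ^ 3) * wfun lam s))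
      = (∫ s in (0:ℝ)..(1/2:ℝ), min 1 θ / 2 * ((v ^ 3 + s ^ 3) * wfun lam s))
        + ((∫ s in (1/2:ℝ)..(3/4:ℝ), min 1 θ / 2 * ((v ^ 3 + s ^ 3) * wfun lam s))
        + ∫ s in (3/4:ℝ)..1, min 1 θ / 2 * ((v ^ 3 + s ^ 3) * wfun lam s)) := by
    rw [intervalIntegral.integral_add_adjacent_intervals
      (hLint (1/2) (3/4) (by norm_num) (by norm_num) (by norm_num) (by norm_num))
      (hLint (3/4) 1 (by norm_num) (by norm_num) (by norm_num) (by norm_num))]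
    rw [intervalIntegral.integral_add_adjacent_intervals
      (hLint 0 (1/2) (by norm_num) (by norm_num) (by norm_num) (by norm_num))
      (hLint (1/2) 1 (by norm_num) (by norm_num) (by norm_num) (by norm_num))]
  have hmid : min 1 θ / 2 * (v ^ 3 + 1/8) * ∫ s in (1/2:ℝ)..(3/4:ℝ), wfun lam s
      ≤ ∫ s in (1/2:ℝ)..(3/4:ℝ), min 1 θ / 2 * ((v ^ 3 + s ^ 3) * wfun lam s) := by
    have hci : IntervalIntegrable
        (fun s => min 1 θ / 2 * (v ^ 3 + 1/8) * wfun lam s) volume (1/2) (3/4) :=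
      (hwsub (1/2) (3/4) (by norm_num) (by norm_num) (by norm_num) (by norm_num)).const_mul _
    have := intervalIntegral.integral_mono_on (by norm_num : (1/2:ℝ) ≤ 3/4) hci
      (hLint (1/2) (3/4) (by norm_num) (by norm_num) (by norm_num) (by norm_num)) ?_
    · rwa [intervalIntegral.integral_const_mul] at this
    · intro x hx
      have hx1 : (1/2:ℝ) ≤ x := hx.1
      have hx2 : x ≤ 3/4 := hx.2
      have hwn : 0 ≤ wfun lam x := hwnn x (by linarith) (by linarith)
      have hcube : (1/8:ℝ) ≤ x ^ 3 := by
        nlinarith [mul_nonneg (by linarith : (0:ℝ) ≤ x - 1/2) (mul_nonneg (by linarith : (0:ℝ) ≤ x) (by linarith : (0:ℝ) ≤ x)), mul_nonneg (by linarith : (0:ℝ) ≤ x - 1/2) (by linarith : (0:ℝ) ≤ x)]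
      have h0 : (0:ℝ) ≤ min 1 θ / 2 := by positivity
      calc min 1 θ / 2 * (v ^ 3 + 1/8) * wfun lam x
          = min 1 θ / 2 * ((v ^ 3 + 1/8) * wfun lam x) := by ring
        _ ≤ min 1 θ / 2 * ((v ^ 3 + x ^ 3) * wfun lam x) := by
            apply mul_le_mul_of_nonneg_left _ h0
            exact mul_le_mul_of_nonneg_right (by linarith) hwn
  have hJnn : 0 ≤ ∫ s in (1/2:ℝ)..(3/4:ℝ), wfun lam s := by
    apply intervalIntegral.integral_nonneg (by norm_num)
    intro x hx
    exact hwnn x (by linarith [hx.1]) (by linarith [hx.2])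
  have hmin0 : 0 < min 1 θ := lt_min one_pos hθ
  have hfinal : min 1 θ / 2 * ((∫ s in (1/2:ℝ)..(3/4), wfun lam s) / 8) * (v ^ 3 + 1)
      ≤ min 1 θ / 2 * (v ^ 3 + 1/8) * ∫ s in (1/2:ℝ)..(3/4:ℝ), wfun lam s := by
    nlinarith [mul_nonneg (mul_nonneg hmin0.le hJnn) (pow_nonneg hv 3), pow_nonneg hv 3, mul_nonneg hmin0.le hJnn]
  calc min 1 θ / 2 * ((∫ s in (1/2:ℝ)..(3/4), wfun lam s) / 8) * (v ^ 3 + 1)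
      ≤ min 1 θ / 2 * (v ^ 3 + 1/8) * ∫ s in (1/2:ℝ)..(3/4:ℝ), wfun lam s := hfinal
    _ ≤ ∫ s in (1/2:ℝ)..(3/4:ℝ), min 1 θ / 2 * ((v ^ 3 + s ^ 3) * wfun lam s) := hmid
    _ ≤ ∫ s in (0:ℝ)..1, min 1 θ / 2 * ((v ^ 3 + s ^ 3) * wfun lam s) := by
        rw [hsplitL]
        have h1 := hLnn 0 (1/2) (by norm_num) (by norm_num) (by norm_num)
        have h2 := hLnn (3/4) 1 (by norm_num) (by norm_num) (by norm_num)
        linarith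
    _ ≤ ∫ s in (0:ℝ)..1, (gfun θ lam v s + gfun θ lam v (-s)) := step1
    _ = ∫ s in (-1:ℝ)..1, gfun θ lam v s := by rw [← hadd, hsplit, hneg]; ring

lemma flux_int_even (θ' lam' R u : ℝ) :
    (∫ s in (-1:ℝ)..1, (-u + θ' * R * s) * ((-u + R * s) * |(-u + R * s)| / 2) * (1 - s ^ 2) ^ lam')
      = ∫ s in (-1:ℝ)..1,
          (u + θ' * R * s) * ((u + R * s) * |(u + R * s)| / 2) * (1 - s ^ 2) ^ lam' := by
  have h2 := intervalIntegral.integral_comp_neg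
    (fun s => (u + θ' * R * s) * ((u + R * s) * |(u + R * s)| / 2) * (1 - s ^ 2) ^ lam')
    (a := -1) (b := 1)
  simp only [neg_neg] at h2
  rw [← h2]
  apply intervalIntegral.integral_congr
  intro s _
  simp only
  have e1 : u + θ' * R * -s = -(-u + θ' * R * s) := by ring
  have e2 : u + R * -s = -(-u + R * s) := by ring
  rw [e1, e2, abs_neg, neg_sq]
  ring

theorem entropyFlux_half_s_abs_s_lower_bound (γ : ℝ) (hγ : 1 < γ) :
    ∃ C : ℝ, 0 < C ∧ ∀ ρ : ℝ, 0 < ρ → ∀ u : ℝ,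
      C⁻¹ * (ρ * |u| ^ 3 + ρ ^ (γ + thetaExp γ)) ≤
        entropyFlux γ (fun s => s * |s| / 2) ρ u := by
  have hθ : 0 < thetaExp γ := by unfold thetaExp; linarith
  have hlam : -1 < lamExp γ := by
    unfold lamExp
    rw [lt_div_iff₀ (by linarith : (0:ℝ) < 2 * (γ - 1))]
    linarith
  have hJ : 0 < ∫ s in (1/2:ℝ)..(3/4), wfun (lamExp γ) s := by
    apply intervalIntegral.intervalIntegral_pos_of_pos_on
    · refine (wfun_int hlam).mono_set (Set.uIcc_subset_uIcc ?_ ?_) <;>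
        · rw [Set.uIcc_of_le (by norm_num : (-1:ℝ) ≤ 1)]; constructor <;> norm_num
    · intro x hx
      exact Real.rpow_pos_of_pos (by nlinarith [hx.1, hx.2]) _
    · norm_num
  set c : ℝ := min 1 (thetaExp γ) / 2 * ((∫ s in (1/2:ℝ)..(3/4), wfun (lamExp γ) s) / 8) with hc
  have hc0 : 0 < c := by
    have hmin : 0 < min 1 (thetaExp γ) := lt_min one_pos hθ
    exact mul_pos (by positivity) (by positivity)
  refine ⟨c⁻¹, inv_pos.mpr hc0, ?_⟩
  intro ρ hρ u
  rw [inv_inv]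
  set r : ℝ := ρ ^ thetaExp γ with hr
  have hrpos : 0 < r := Real.rpow_pos_of_pos hρ _
  set v : ℝ := |u| / r with hv
  have hv0 : 0 ≤ v := by positivity
  have huv : |u| = r * v := by rw [hv]; field_simp
  -- the flux with u replaced by |u|
  have hA : entropyFlux γ (fun s => s * |s| / 2) ρ u
      = entropyFlux γ (fun s => s * |s| / 2) ρ |u| := by
    rcases abs_cases u with ⟨h, _⟩ | ⟨h, _⟩
    · rw [h]
    · rw [h]
      unfold entropyFlux
      congr 1
      exact (flux_int_even (thetaExp γ) (lamExp γ) (ρ ^ thetaExp γ) u).symm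
  rw [hA]
  unfold entropyFlux
  have hInt : (∫ s in (-1:ℝ)..1,
      (|u| + thetaExp γ * ρ ^ thetaExp γ * s)
        * ((|u| + ρ ^ thetaExp γ * s) * |(|u| + ρ ^ thetaExp γ * s)| / 2)
        * (1 - s ^ 2) ^ lamExp γ)
      = r ^ 3 * ∫ s in (-1:ℝ)..1, gfun (thetaExp γ) (lamExp γ) v s := by
    rw [← intervalIntegral.integral_const_mul]
    apply intervalIntegral.integral_congr
    intro s _
    simp only [gfun, wfun]
    have e1 : |u| + thetaExp γ * ρ ^ thetaExp γ * s = r * (v + thetaExp γ * s) := by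
      rw [huv]; rw [hr]; ring
    have e2 : |u| + ρ ^ thetaExp γ * s = r * (v + s) := by
      rw [huv]; rw [hr]; ring
    rw [e1, e2, abs_mul, abs_of_pos hrpos]
    ring
  have hB := integral_bound hθ hlam hv0
  have hmain : ρ * (r ^ 3 * (c * (v ^ 3 + 1)))
      ≤ ρ * ∫ s in (-1:ℝ)..1,
        (|u| + thetaExp γ * ρ ^ thetaExp γ * s)
          * ((|u| + ρ ^ thetaExp γ * s) * |(|u| + ρ ^ thetaExp γ * s)| / 2)
          * (1 - s ^ 2) ^ lamExp γ := by
    rw [hInt]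
    apply mul_le_mul_of_nonneg_left _ hρ.le
    apply mul_le_mul_of_nonneg_left _ (by positivity : (0:ℝ) ≤ r ^ 3)
    calc c * (v ^ 3 + 1)
        = min 1 (thetaExp γ) / 2
            * ((∫ s in (1/2:ℝ)..(3/4), wfun (lamExp γ) s) / 8) * (v ^ 3 + 1) := by rw [hc]
      _ ≤ _ := hB
  refine le_trans (le_of_eq ?_) hmain
  have hρr : ρ * r ^ 3 = ρ ^ (γ + thetaExp γ) := by
    have h3 : r ^ 3 = ρ ^ (thetaExp γ * 3) := by
      rw [hr, ← Real.rpow_natCast (ρ ^ thetaExp γ) 3, ← Real.rpow_mul hρ.le]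
      norm_num
    have h4 : γ + thetaExp γ = 1 + thetaExp γ * 3 := by unfold thetaExp; ring
    rw [h3, h4, Real.rpow_add hρ, Real.rpow_one]
  have huv3 : ρ * |u| ^ 3 = ρ * (r ^ 3 * v ^ 3) := by
    rw [huv, mul_pow]
  calc c * (ρ * |u| ^ 3 + ρ ^ (γ + thetaExp γ))
      = c * (ρ * (r ^ 3 * v ^ 3) + ρ * r ^ 3) := by rw [huv3, ← hρr]
    _ = ρ * (r ^ 3 * (c * (v ^ 3 + 1))) := by ring
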